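/- If there exists a real symmetric positive semidefinite matrix X with 𝒜X = b and tr(X) ≤ α, then y = 0 is a global minimizer of the penalized dual objective f, i.e. f(0) ≤ f(y) for all y ∈ ℝ^m. -/

import Mathlib

open Matrix

open scoped Classical in
/-- Maximum eigenvalue of a real symmetric (Hermitian) matrix. -/
noncomputable def lambdaMax {n : ℕ} (M : Matrix (Fin n) (Fin n) ℝ) : ℝ :=
  if h : M.IsHermitian then ⨆ i, h.eigenvalues i else 0

/-- Frobenius (trace) inner product of real matrices. -/
def frob {n : ℕ} (A B : Matrix (Fin n) (Fin n) ℝ) : ℝ := (Aᵀ * B).trace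

/-- The penalized dual objective
`f(y) = α·max{λ_max(−𝒜*y), 0} + ⟨b, y⟩`, where `𝒜*y = Σ_i y_i A_i`. -/
noncomputable def penDual {n m : ℕ} (A : Fin m → Matrix (Fin n) (Fin n) ℝ)
    (b : Fin m → ℝ) (α : ℝ) (y : Fin m → ℝ) : ℝ :=
  α * max (lambdaMax (-(∑ i, y i • A i))) 0 + b ⬝ᵥ y

lemma aux_trace_nonneg {n : ℕ} {M : Matrix (Fin n) (Fin n) ℝ} (hM : M.PosSemidef) :
    0 ≤ M.trace := by
  rw [Matrix.trace]
  refine Finset.sum_nonneg fun i _ => ?_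
  exact hM.diag_nonneg

open scoped MatrixOrder in
lemma aux_trace_mul_nonneg {n : ℕ} {P X : Matrix (Fin n) (Fin n) ℝ}
    (hP : P.PosSemidef) (hX : X.PosSemidef) : 0 ≤ (P * X).trace := by
  obtain ⟨B, hB⟩ := CStarAlgebra.nonneg_iff_eq_star_mul_self.mp hP.nonneg
  rw [hB, Matrix.star_eq_conjTranspose, Matrix.mul_assoc, Matrix.trace_mul_comm]
  exact aux_trace_nonneg (hX.mul_mul_conjTranspose_same B)

lemma aux_smul_one_sub_posSemidef {n : ℕ} {M : Matrix (Fin n) (Fin n) ℝ}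
    (hM : M.IsHermitian) {t : ℝ} (ht : ∀ i, hM.eigenvalues i ≤ t) :
    ((t • (1 : Matrix (Fin n) (Fin n) ℝ)) - M).PosSemidef := by
  have hspec := hM.spectral_theorem
  simp only [Unitary.conjStarAlgAut_apply, Unitary.coe_star] at hspec
  set U : Matrix (Fin n) (Fin n) ℝ := (hM.eigenvectorUnitary : Matrix (Fin n) (Fin n) ℝ)
  have hU : U * star U = 1 := (Matrix.mem_unitaryGroup_iff).mp hM.eigenvectorUnitary.2
  have key : (t • (1 : Matrix (Fin n) (Fin n) ℝ)) - M
      = U * Matrix.diagonal (fun i => t - hM.eigenvalues i) * star U := by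
    have hd : Matrix.diagonal (fun i => t - hM.eigenvalues i)
        = t • (1 : Matrix (Fin n) (Fin n) ℝ) - Matrix.diagonal (RCLike.ofReal ∘ hM.eigenvalues) := by
      ext i j
      by_cases h : i = j <;> simp [h, Matrix.one_apply]
    rw [hd, Matrix.mul_sub, Matrix.sub_mul, Matrix.mul_smul, mul_one, Matrix.smul_mul, hU,
      ← hspec]
  rw [key, Matrix.star_eq_conjTranspose]
  exact (Matrix.posSemidef_diagonal_iff.mpr (fun i => sub_nonneg.mpr (ht i))).mul_mul_conjTranspose_same U

lemma aux_lambdaMax_zero {n : ℕ} (hn : 0 < n) :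
    lambdaMax (0 : Matrix (Fin n) (Fin n) ℝ) = 0 := by
  have h0 : (0 : Matrix (Fin n) (Fin n) ℝ).IsHermitian := Matrix.isHermitian_zero
  rw [lambdaMax, dif_pos h0]
  have : ∀ i, h0.eigenvalues i = 0 := by
    intro i
    have := h0.eigenvalues_eq i
    simpa using this
  simp only [this]
  haveI : Nonempty (Fin n) := ⟨⟨0, hn⟩⟩
  exact ciSup_const

/-- if there exists a real symmetric positive semidefinite `X` with
`𝒜X = b` and `tr(X) ≤ α`, then `y = 0` is a global minimizer of the penalized dual
objective `f`. -/
theorem penDual_zero_is_minimizer_of_feasible {n m : ℕ} (hn : 0 < n) (hm : 0 < m)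
    (A : Fin m → Matrix (Fin n) (Fin n) ℝ) (hA : ∀ i, (A i).IsSymm)
    (b : Fin m → ℝ) (α : ℝ) (hα : 0 < α)
    (hfeas : ∃ X : Matrix (Fin n) (Fin n) ℝ,
      X.PosSemidef ∧ (∀ i, frob (A i) X = b i) ∧ X.trace ≤ α) :
    ∀ y : Fin m → ℝ, penDual A b α 0 ≤ penDual A b α y := by
  haveI : Nonempty (Fin n) := ⟨⟨0, hn⟩⟩
  obtain ⟨X, hX, hAX, htr⟩ := hfeas
  intro y
  have hzero : penDual A b α 0 = 0 := by
    simp [penDual, aux_lambdaMax_zero hn]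
  rw [hzero]
  -- setup
  set S : Matrix (Fin n) (Fin n) ℝ := ∑ i, y i • A i with hS
  have hSsymm : Sᵀ = S := by
    rw [hS, Matrix.transpose_sum]
    exact Finset.sum_congr rfl fun i _ => by rw [Matrix.transpose_smul, (hA i).eq]
  have hMherm : (-S).IsHermitian := by
    rw [Matrix.IsHermitian]
    ext i j
    simp [Matrix.conjTranspose_apply]
    exact congrFun (congrFun hSsymm.symm j) i
  set t : ℝ := max (lambdaMax (-S)) 0 with htdef
  have ht0 : 0 ≤ t := le_max_right _ _
  have hev : ∀ i, hMherm.eigenvalues i ≤ t := by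
    intro i
    refine le_trans ?_ (le_max_left _ _)
    have : lambdaMax (-S) = ⨆ j, hMherm.eigenvalues j := by
      rw [lambdaMax, dif_pos hMherm]
    rw [this]
    exact le_ciSup (Set.Finite.bddAbove (Set.finite_range _)) i
  have hPSD := aux_smul_one_sub_posSemidef hMherm hev
  have htrace := aux_trace_mul_nonneg hPSD hX
  have hexp : ((t • (1 : Matrix (Fin n) (Fin n) ℝ) - (-S)) * X).trace
      = t * X.trace + (S * X).trace := by
    rw [Matrix.sub_mul, Matrix.trace_sub, Matrix.smul_mul, one_mul, Matrix.trace_smul,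
      Matrix.neg_mul, Matrix.trace_neg, smul_eq_mul, sub_neg_eq_add]
  rw [hexp] at htrace
  -- b ⬝ᵥ y = tr (S * X)
  have hb : b ⬝ᵥ y = (S * X).trace := by
    have : ∀ i, b i = ((A i) * X).trace := by
      intro i
      rw [← hAX i, frob, (hA i).eq]
    rw [dotProduct]
    simp only [this]
    rw [hS, Matrix.sum_mul]
    rw [Matrix.trace_sum]
    refine Finset.sum_congr rfl fun i _ => ?_
    rw [Matrix.smul_mul, Matrix.trace_smul, smul_eq_mul]
    ring
  have hkey : -(S * X).trace ≤ t * X.trace := by linarith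
  have h2 : t * X.trace ≤ t * α := mul_le_mul_of_nonneg_left htr ht0
  have : penDual A b α y = α * t + (S * X).trace := by
    rw [penDual, hb, ← hS]
  rw [this]
  nlinarith
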